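/- Define v(α, σ, p, χ) = p²(p+1) − ⟨X − S, X − S⟩·p − (⟨(−sin(α−σ), cos(α−σ)), X − S⟩)², where X = (√(p+p²)cos χ, −p sin χ) and S = (2 sin α − sin(α−σ), 1 − 2cos α + cos(α−σ)). Then on the region C̃ = {(α,σ,p,χ) : 0 ≤ α ≤ arctan(√(M+M²)), 0 ≤ σ ≤ π, m ≤ p ≤ M, 0 ≤ χ ≤ π/2, tan²α ≤ 2p + p²} with m = 0.5 and M = 0.96, the partial derivative of v with respect to σ satisfies |∂v/∂σ| ≤ 12 + 14M + 4M². -/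

import Mathlib

set_option maxHeartbeats 4000000


open Real

/-- Bound `|∂v/∂σ| ≤ 12 + 14M + 4M²` on the region `C̃` with `m = 0.5`, `M = 0.96`. -/
theorem stmt_17 (α σ p χ : ℝ)
    (hα : 0 ≤ α) (hα' : α ≤ arctan (Real.sqrt (0.96 + 0.96 ^ 2)))
    (hσ : 0 ≤ σ) (hσ' : σ ≤ π)
    (hp : 0.5 ≤ p) (hp' : p ≤ 0.96)
    (hχ : 0 ≤ χ) (hχ' : χ ≤ π / 2)
    (htan : tan α ^ 2 ≤ 2 * p + p ^ 2) :
    |deriv (fun s : ℝ =>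
      p ^ 2 * (p + 1)
      - ((Real.sqrt (p + p ^ 2) * cos χ - (2 * sin α - sin (α - s))) ^ 2
          + (-p * sin χ - (1 - 2 * cos α + cos (α - s))) ^ 2) * p
      - (-sin (α - s) * (Real.sqrt (p + p ^ 2) * cos χ - (2 * sin α - sin (α - s)))
          + cos (α - s) * (-p * sin χ - (1 - 2 * cos α + cos (α - s)))) ^ 2) σ|
      ≤ 12 + 14 * 0.96 + 4 * 0.96 ^ 2 := by
  have hπ := Real.pi_pos
  have hu : HasDerivAt (fun s : ℝ => α - s) (-1) σ := by
    simpa using (hasDerivAt_id σ).const_sub α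
  have hsin : HasDerivAt (fun s : ℝ => sin (α - s)) (cos (α - σ) * (-1)) σ :=
    (Real.hasDerivAt_sin (α - σ)).comp σ hu
  have hcos : HasDerivAt (fun s : ℝ => cos (α - s)) (-sin (α - σ) * (-1)) σ :=
    (Real.hasDerivAt_cos (α - σ)).comp σ hu
  have hA : HasDerivAt
      (fun s : ℝ => Real.sqrt (p + p ^ 2) * cos χ - (2 * sin α - sin (α - s)))
      (-(0 - cos (α - σ) * (-1))) σ :=
    ((hasDerivAt_const σ (2 * sin α)).sub hsin).const_sub _
  have hB : HasDerivAt
      (fun s : ℝ => -p * sin χ - (1 - 2 * cos α + cos (α - s)))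
      (-(0 + -sin (α - σ) * (-1))) σ :=
    ((hasDerivAt_const σ (1 - 2 * cos α)).add hcos).const_sub _
  have hF :
      HasDerivAt (fun s : ℝ =>
        p ^ 2 * (p + 1)
        - ((Real.sqrt (p + p ^ 2) * cos χ - (2 * sin α - sin (α - s))) ^ 2
            + (-p * sin χ - (1 - 2 * cos α + cos (α - s))) ^ 2) * p
        - (-sin (α - s) * (Real.sqrt (p + p ^ 2) * cos χ - (2 * sin α - sin (α - s)))
            + cos (α - s) * (-p * sin χ - (1 - 2 * cos α + cos (α - s)))) ^ 2)
      (2 * (p - (-sin (α - σ) * (Real.sqrt (p + p ^ 2) * cos χ - (2 * sin α - sin (α - σ)))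
            + cos (α - σ) * (-p * sin χ - (1 - 2 * cos α + cos (α - σ)))))
        * ((Real.sqrt (p + p ^ 2) * cos χ - (2 * sin α - sin (α - σ))) * cos (α - σ)
            + (-p * sin χ - (1 - 2 * cos α + cos (α - σ))) * sin (α - σ))) σ := by
    exact (((hasDerivAt_const σ (p ^ 2 * (p + 1))).sub
        (((hA.pow 2).add (hB.pow 2)).mul_const p)).sub
        ((((hsin.neg).mul hA).add (hcos.mul hB)).pow 2)).congr_deriv (by simp only [Pi.add_apply, Pi.mul_apply, Pi.neg_apply]; push_cast; ring)
  rw [hF.deriv]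
  -- abbreviate
  set A := Real.sqrt (p + p ^ 2) * cos χ - (2 * sin α - sin (α - σ)) with hAdef
  set B := -p * sin χ - (1 - 2 * cos α + cos (α - σ)) with hBdef
  set T := -sin (α - σ) * A + cos (α - σ) * B with hTdef
  set K := A * cos (α - σ) + B * sin (α - σ) with hKdef
  clear_value A B T K
  clear hF hu hsin hcos hA hB htan
  -- basic positivity / sign facts
  have hsq : Real.sqrt (p + p ^ 2) ^ 2 = p + p ^ 2 := Real.sq_sqrt (by nlinarith)
  have hsqnn : 0 ≤ Real.sqrt (p + p ^ 2) := Real.sqrt_nonneg _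
  have hapi : α ≤ π := le_trans hα' (le_trans (Real.arctan_lt_pi_div_two _).le (by linarith))
  have hsinα : 0 ≤ sin α := Real.sin_nonneg_of_nonneg_of_le_pi hα hapi
  have hsinχ : 0 ≤ sin χ := Real.sin_nonneg_of_nonneg_of_le_pi hχ (by linarith)
  have hcosχ : 0 ≤ cos χ := Real.cos_nonneg_of_mem_Icc ⟨by linarith, hχ'⟩
  have hcosα : (0.5889 : ℝ) ≤ cos α := by
    have h1 : cos (arctan (Real.sqrt (0.96 + 0.96 ^ 2))) ≤ cos α :=
      Real.cos_le_cos_of_nonneg_of_le_pi hα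
        (le_trans (Real.arctan_lt_pi_div_two _).le (by linarith)) hα'
    have h2 : cos (arctan (Real.sqrt (0.96 + 0.96 ^ 2)))
        = 1 / Real.sqrt (1 + (0.96 + 0.96 ^ 2)) := by
      rw [Real.cos_arctan, Real.sq_sqrt (by norm_num)]
    have h3 : Real.sqrt (1 + (0.96 + 0.96 ^ 2)) ≤ 1.698 := by
      rw [show (1.698:ℝ) = Real.sqrt (1.698 ^ 2) from (Real.sqrt_sq (by norm_num)).symm]
      exact Real.sqrt_le_sqrt (by norm_num)
    have h4 : 0 < Real.sqrt (1 + (0.96 + 0.96 ^ 2)) := Real.sqrt_pos.mpr (by norm_num)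
    have h5 : (0.5889:ℝ) ≤ 1 / Real.sqrt (1 + (0.96 + 0.96 ^ 2)) := by
      rw [le_div_iff₀ h4]; nlinarith
    rw [h2] at h1; linarith
  -- bound on ‖X - P‖²
  have hR : (Real.sqrt (p + p ^ 2) * cos χ - 2 * sin α) ^ 2
      + (-p * sin χ - (1 - 2 * cos α)) ^ 2 ≤ 4.5264 := by
    nlinarith [hsq, Real.sin_sq_add_cos_sq α, Real.sin_sq_add_cos_sq χ, hcosα,
      mul_nonneg (mul_nonneg hsqnn hcosχ) hsinα,
      mul_nonneg (mul_nonneg (by linarith : (0:ℝ) ≤ p) hsinχ)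
        (by linarith : (0:ℝ) ≤ 2 * cos α - 1),
      mul_nonneg (by linarith : (0:ℝ) ≤ p) (sq_nonneg (sin χ)), hp, hp']
  have hsR : Real.sqrt ((Real.sqrt (p + p ^ 2) * cos χ - 2 * sin α) ^ 2
      + (-p * sin χ - (1 - 2 * cos α)) ^ 2) ≤ 2.128 := by
    rw [show (2.128:ℝ) = Real.sqrt (2.128 ^ 2) from (Real.sqrt_sq (by norm_num)).symm]
    refine Real.sqrt_le_sqrt ?_
    nlinarith [hR]
  have hc : (Real.sqrt (p + p ^ 2) * cos χ - 2 * sin α) * sin (α - σ)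
      - (-p * sin χ - (1 - 2 * cos α)) * cos (α - σ) ≤ 2.128 := by
    have h1 : ((Real.sqrt (p + p ^ 2) * cos χ - 2 * sin α) * sin (α - σ)
        - (-p * sin χ - (1 - 2 * cos α)) * cos (α - σ)) ^ 2
        ≤ (Real.sqrt (p + p ^ 2) * cos χ - 2 * sin α) ^ 2
          + (-p * sin χ - (1 - 2 * cos α)) ^ 2 := by
      nlinarith [sq_nonneg ((Real.sqrt (p + p ^ 2) * cos χ - 2 * sin α) * cos (α - σ)
        + (-p * sin χ - (1 - 2 * cos α)) * sin (α - σ)), Real.sin_sq_add_cos_sq (α - σ)]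
    calc (Real.sqrt (p + p ^ 2) * cos χ - 2 * sin α) * sin (α - σ)
        - (-p * sin χ - (1 - 2 * cos α)) * cos (α - σ)
        ≤ |(Real.sqrt (p + p ^ 2) * cos χ - 2 * sin α) * sin (α - σ)
          - (-p * sin χ - (1 - 2 * cos α)) * cos (α - σ)| := le_abs_self _
      _ = Real.sqrt (((Real.sqrt (p + p ^ 2) * cos χ - 2 * sin α) * sin (α - σ)
          - (-p * sin χ - (1 - 2 * cos α)) * cos (α - σ)) ^ 2) :=
          (Real.sqrt_sq_eq_abs _).symm
      _ ≤ Real.sqrt ((Real.sqrt (p + p ^ 2) * cos χ - 2 * sin α) ^ 2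
          + (-p * sin χ - (1 - 2 * cos α)) ^ 2) := Real.sqrt_le_sqrt h1
      _ ≤ 2.128 := hsR
  have hQ : A ^ 2 + B ^ 2 ≤ 3.128 ^ 2 := by
    rw [hAdef, hBdef]
    nlinarith [hR, hc, Real.sin_sq_add_cos_sq (α - σ)]
  have hT2 : T ^ 2 ≤ A ^ 2 + B ^ 2 := by
    rw [hTdef]
    nlinarith [sq_nonneg (cos (α - σ) * A + sin (α - σ) * B), Real.sin_sq_add_cos_sq (α - σ)]
  have hK2 : K ^ 2 ≤ A ^ 2 + B ^ 2 := by
    rw [hKdef]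
    nlinarith [sq_nonneg (A * sin (α - σ) - B * cos (α - σ)), Real.sin_sq_add_cos_sq (α - σ)]
  have hT : |T| ≤ 3.128 := abs_le.mpr
    ⟨by linarith [hT2, hQ, sq_nonneg (T + 3.128)],
     by linarith [hT2, hQ, sq_nonneg (T - 3.128)]⟩
  have hK : |K| ≤ 3.128 := abs_le.mpr
    ⟨by linarith [hK2, hQ, sq_nonneg (K + 3.128)],
     by linarith [hK2, hQ, sq_nonneg (K - 3.128)]⟩
  obtain ⟨hT1, hT2'⟩ := abs_le.mp hT
  have h1 : |2 * (p - T) * K| = 2 * (|p - T| * |K|) := by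
    rw [abs_mul, abs_mul, abs_two]; ring
  rw [h1]
  have h2 : |p - T| ≤ 4.088 := abs_le.mpr ⟨by linarith, by linarith⟩
  nlinarith [abs_nonneg (p - T), abs_nonneg K, h2, hK]
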